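/- Let (B, *) be a finite set of elements closed under a convolution product p_i * p_j = Σ_k N_{ij}^k p_k with nonnegative coefficients, with unit p_0 and duality satisfying Frobenius reciprocity N_{ij}^k d_k = N_{j k̄}^{ī} d_{ī} with all d_i > 0. Define p_i ≦ p_j if p_i * p_j and p_j * p_i are both scalar multiples of p_j. Suppose L = S ⊔ R is a partition with p_0 ∈ S, R nonempty, and p_i ≦ p_k for all p_i ∈ S, p_k ∈ R, and suppose ≦ is antisymmetric on distinct elements (p_r ≦ p_{r̄} and p_{r̄} ≦ p_r cannot both hold for r ∈ R). Then the convolution is closed on S: for all p_i, p_j ∈ S, every p_k with N_{ij}^k ≠ 0 lies in S. -/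
import Mathlib


/-- `p_i ≦ p_j`: both `p_i * p_j` and `p_j * p_i` are scalar multiples of
`p_j`, i.e. the fusion supports are contained in `{j}`. -/
def fbLeq (n : ℕ) (N : Fin (n + 1) → Fin (n + 1) → Fin (n + 1) → ℝ)
    (i j : Fin (n + 1)) : Prop :=
  (∀ k, N i j k ≠ 0 → k = j) ∧ (∀ k, N j i k ≠ 0 → k = j)

/-- If `L = S ⊔ R` with `p₀ ∈ S`, `R` nonempty, `p_i ≦ p_k` for all
`p_i ∈ S`, `p_k ∈ R`, and `≦` is antisymmetric on distinct elements, then the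
convolution is closed on `S`. -/
theorem stmt10 (n : ℕ) (N : Fin (n + 1) → Fin (n + 1) → Fin (n + 1) → ℝ)
    (d : Fin (n + 1) → ℝ) (bar : Fin (n + 1) → Fin (n + 1))
    (hN : ∀ i j k, 0 ≤ N i j k) (hd : ∀ i, 0 < d i)
    (hbar : Function.Involutive bar) (hdbar : ∀ i, d i = d (bar i))
    (hdual : ∀ i j, N i j 0 = if j = bar i then d i else 0)
    (hfrob : ∀ i j k, N i j k * d k = N j (bar k) (bar i) * d (bar i))
    (S R : Set (Fin (n + 1)))
    (hpart : ∀ x, x ∈ S ↔ x ∉ R) (h0S : (0 : Fin (n + 1)) ∈ S)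
    (hRne : R.Nonempty)
    (hSR : ∀ i ∈ S, ∀ k ∈ R, fbLeq n N i k)
    (hanti : ∀ i j, i ≠ j → ¬(fbLeq n N i j ∧ fbLeq n N j i)) :
    ∀ i ∈ S, ∀ j ∈ S, ∀ k, N i j k ≠ 0 → k ∈ S := by
  intro i hi j hj k hk
  by_contra hkS
  have hkR : k ∈ R := by
    by_contra h; exact hkS ((hpart k).2 h)
  by_cases hbk : bar k ∈ S
  · have h := (hSR (bar k) hbk k hkR).2 0
    have hval : N k (bar k) 0 = d k := by
      rw [hdual]; simp [hbar k]
    have h0k : (0 : Fin (n + 1)) = k := h (by rw [hval]; exact (hd k).ne')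
    exact hkS (h0k ▸ h0S)
  · have hbkR : bar k ∈ R := by
      by_contra h; exact hbk ((hpart (bar k)).2 h)
    have h1 : N j (bar k) (bar i) ≠ 0 := by
      intro h
      apply hk
      have heq := hfrob i j k
      rw [h, zero_mul] at heq
      exact (mul_eq_zero.mp heq).resolve_right (hd k).ne'
    have h2 : N (bar k) i (bar j) ≠ 0 := by
      intro h
      apply h1
      have heq := hfrob j (bar k) (bar i)
      rw [hbar i, h, zero_mul] at heq
      exact (mul_eq_zero.mp heq).resolve_right (hd (bar i)).ne'
    have hbj : bar j = bar k := (hSR i hi (bar k) hbkR).2 (bar j) h2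
    have hjk : j = k := hbar.injective hbj
    exact hkS (hjk ▸ hj)
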